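/- arXiv:2501.00671 — 2 statements merged into one kernel-verified Lean document; each statement's English description precedes it below -/
import Mathlib

section
/- Let $X_1,\ldots,X_{d+2}$ be i.i.d. random points in $\mathbb{R}^d$ with an absolutely continuous distribution $\mu$. Then the probability that their convex hull is a simplex (i.e., has exactly $d+1$ vertices) equals $(d+2)\cdot \mathbb{E}[\mu([X_1,\ldots,X_{d+1}])]$. -/
open MeasureTheory Metric

noncomputable section

/-- `ℝ^d` as a Euclidean space. -/
abbrev E (d : ℕ) := EuclideanSpace ℝ (Fin d)

/-- The positive hull `pos(v_1, …, v_k)` of finitely many vectors. -/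
def posHull {m k : ℕ} (v : Fin k → E m) : Set (E m) :=
  {x | ∃ c : Fin k → ℝ, (∀ i, 0 ≤ c i) ∧ x = ∑ i, c i • v i}

/-- The normalized solid angle of a cone `C`: the proportion of the unit ball of the
linear hull of `C` occupied by `C` (computed via an orthonormal coordinate system on
the linear hull, under which Lebesgue measure on the linear hull corresponds to
Lebesgue measure on a Euclidean space). -/
def solidAngle {m : ℕ} (C : Set (E m)) : ℝ :=
  let L := Submodule.span ℝ C
  let b := stdOrthonormalBasis ℝ L
  (volume ((fun x : L => (b.repr x : E (Module.finrank ℝ L))) ''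
      {x : L | (x : E m) ∈ C} ∩ ball 0 1) /
    volume (ball (0 : E (Module.finrank ℝ L)) 1)).toReal

/-- The standard Gaussian distribution on `ℝ^d`. -/
def stdGaussian (d : ℕ) : Measure (E d) :=
  Measure.map (MeasurableEquiv.toLp 2 (Fin d → ℝ))
    (Measure.pi fun _ : Fin d => ProbabilityTheory.gaussianReal 0 1)

/-- The event that the convex hull of `d+2` points in `ℝ^d` (in general affine position)
is a simplex: one of the points lies in the convex hull of the others. -/
def simplexEvent {d : ℕ} (x : Fin (d + 2) → E d) : Prop :=
  ∃ i, x i ∈ convexHull ℝ (x '' {i}ᶜ)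

/-- The uniform probability distribution on the unit sphere `S^{d-1} ⊂ ℝ^d`,
as the normalized `(d-1)`-dimensional Hausdorff measure on the sphere. -/
def uniformSphere (d : ℕ) : Measure (E d) :=
  ((μH[(d : ℝ) - 1] (sphere (0 : E d) 1))⁻¹ • μH[(d : ℝ) - 1]).restrict (sphere (0 : E d) 1)

/-- The beta distribution `μ_{d,β}` on `ℝ^d`, with density
`c_{d,β} (1-‖x‖²)^β 𝟙_{‖x‖<1}` for `β > -1`, and interpreted as the uniform
distribution on the unit sphere for `β = -1`. -/
def betaM (d : ℕ) (β : ℝ) : Measure (E d) :=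
  if β = -1 then uniformSphere d
  else volume.withDensity fun x =>
    if ‖x‖ < 1 then
      ENNReal.ofReal ((Real.Gamma (d / 2 + β + 1) / (Real.pi ^ ((d : ℝ) / 2) * Real.Gamma (β + 1)))
        * (1 - ‖x‖ ^ 2) ^ β) else 0

/-- The beta prime distribution `μ̃_{d,β}` on `ℝ^d` (for `β > d/2`), with density
`c̃_{d,β} (1+‖x‖²)^{-β}`. -/
def betaPrimeM (d : ℕ) (β : ℝ) : Measure (E d) :=
  volume.withDensity fun x =>
    ENNReal.ofReal ((Real.Gamma β / (Real.pi ^ ((d : ℝ) / 2) * Real.Gamma (β - d / 2)))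
      * (1 + ‖x‖ ^ 2) ^ (-β))

/-- The uniform distribution on the unit ball of `ℝ^d`. -/
def uniformBall (d : ℕ) : Measure (E d) :=
  (volume (ball (0 : E d) 1))⁻¹ • volume.restrict (ball (0 : E d) 1)

/-- `𝕁_{m+1,1}(∞)`: the sum of the internal solid angles at the vertices of the regular
`m`-dimensional simplex `[e_1, …, e_{m+1}] ⊂ ℝ^{m+1}`. -/
def Jinf (m : ℕ) : ℝ :=
  (m + 1) * solidAngle (posHull fun j : Fin m =>
    (EuclideanSpace.single j.succ (1 : ℝ) - EuclideanSpace.single 0 1 : E (m + 1)))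

/-- The entire extension of the standard normal CDF, via its power series. -/
def PhiC (z : ℂ) : ℂ :=
  1 / 2 + (Real.sqrt (2 * Real.pi))⁻¹ *
    ∑' n : ℕ, ((-1 : ℂ) ^ n / ((2 * n + 1) * 2 ^ n * n.factorial)) * z ^ (2 * n + 1)

open Set Finset

private lemma sum_dite_sub {ι M : Type*} [Fintype ι] [AddCommMonoid M] [DecidableEq ι]
    (s : Finset ι) (t : Finset {i // i ∈ s}) (g : {i // i ∈ s} → M) :
    ∑ i : ι, (if h : i ∈ s then (if ⟨i, h⟩ ∈ t then g ⟨i, h⟩ else 0) else 0) = ∑ j ∈ t, g j := by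
  rw [← Finset.sum_subset (Finset.subset_univ s) (by intro i _ hi; simp [hi])]
  rw [← Finset.sum_attach s (fun i => if h : i ∈ s then (if ⟨i, h⟩ ∈ t then g ⟨i, h⟩ else 0) else 0)]
  have : ∀ j : {i // i ∈ s},
      (if h : (j : ι) ∈ s then (if ⟨(j : ι), h⟩ ∈ t then g ⟨(j : ι), h⟩ else 0) else 0)
        = if j ∈ t then g j else 0 := by
    intro j; rw [dif_pos j.2]
  rw [Finset.sum_congr rfl fun j _ => this j, Finset.sum_ite_mem,
    Finset.inter_eq_right.2 fun j _ => Finset.mem_attach s j]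

lemma mem_convexHull_image_iff {n d : ℕ} (x : Fin n → E d) (s : Finset (Fin n)) (y : E d) :
    y ∈ convexHull ℝ (x '' ↑s) ↔
    ∃ w : Fin n → ℝ, (∀ i, 0 ≤ w i) ∧ (∀ i ∉ s, w i = 0) ∧ ∑ i, w i = 1 ∧ ∑ i, w i • x i = y := by
  classical
  have himg : x '' ↑s = Set.range (fun i : {i // i ∈ s} => x i) := Set.image_eq_range _ _
  rw [himg, convexHull_range_eq_exists_affineCombination]
  constructor
  · rintro ⟨t, w', hw0, hw1, rfl⟩
    refine ⟨fun i => if h : i ∈ s then (if ⟨i, h⟩ ∈ t then w' ⟨i, h⟩ else 0) else 0, ?_, ?_, ?_, ?_⟩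
    · intro i; dsimp only; split_ifs with h1 h2
      · exact hw0 _ h2
      · exact le_rfl
      · exact le_rfl
    · intro i hi; simp [hi]
    · rw [sum_dite_sub s t w', hw1]
    · rw [affineCombination_eq_linear_combination t _ _ hw1]
      rw [← sum_dite_sub s t (fun j => w' j • x (j : Fin n))]
      refine Finset.sum_congr rfl fun i _ => ?_
      by_cases h : i ∈ s
      · simp only [dif_pos h]; split_ifs <;> simp
      · simp [h]
  · rintro ⟨w, hw0, hws, hw1, rfl⟩
    refine ⟨s.attach, fun j => w j, fun j _ => hw0 j, ?_, ?_⟩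
    · rw [Finset.sum_attach s (fun i => w i), ← hw1]
      exact Finset.sum_subset (Finset.subset_univ s) (fun i _ hi => hws i hi)
    · have h1 : ∑ j ∈ s.attach, w (j : Fin n) = 1 := by
        rw [Finset.sum_attach s (fun i => w i), ← hw1]
        exact Finset.sum_subset (Finset.subset_univ s) (fun i _ hi => hws i hi)
      rw [affineCombination_eq_linear_combination _ _ _ h1]
      rw [Finset.sum_attach s (fun i => w i • x i)]
      exact Finset.sum_subset (Finset.subset_univ s) (fun i _ hi => by simp [hws i hi])

lemma isClosed_combo {k d : ℕ} {K : Set (Fin k → ℝ)} (hK : IsCompact K) :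
    IsClosed {p : (Fin k → E d) × E d | ∃ c ∈ K, p.2 = ∑ i, c i • p.1 i} := by
  have : {p : (Fin k → E d) × E d | ∃ c ∈ K, p.2 = ∑ i, c i • p.1 i}
      = Prod.snd '' {q : K × ((Fin k → E d) × E d) | q.2.2 = ∑ i, (q.1 : Fin k → ℝ) i • q.2.1 i} := by
    ext p
    constructor
    · rintro ⟨c, hc, hp⟩; exact ⟨⟨⟨c, hc⟩, p⟩, hp, rfl⟩
    · rintro ⟨⟨c, q⟩, hq, rfl⟩; exact ⟨(c : Fin k → ℝ), c.2, hq⟩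
  rw [this]
  have : CompactSpace K := isCompact_iff_compactSpace.mp hK
  apply isClosedMap_snd_of_compactSpace
  apply isClosed_eq
  · exact continuous_snd.comp continuous_snd
  · refine continuous_finset_sum _ fun i _ => Continuous.fun_smul ?_ ?_
    · exact (continuous_apply i).comp (continuous_subtype_val.comp continuous_fst)
    · exact (continuous_apply i).comp (continuous_fst.comp continuous_snd)

lemma isClosed_convexHull_event {k d : ℕ} :
    IsClosed {p : (Fin k → E d) × E d | p.2 ∈ convexHull ℝ (Set.range p.1)} := by
  have h := isClosed_combo (K := stdSimplex ℝ (Fin k)) (d := d) (isCompact_stdSimplex _ _)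
  convert h using 1
  ext p
  have : Set.range p.1 = p.1 '' ↑(Finset.univ : Finset (Fin k)) := by simp
  rw [Set.mem_setOf_eq, this, mem_convexHull_image_iff]
  constructor
  · rintro ⟨w, hw0, _, hw1, hwy⟩; exact ⟨w, ⟨hw0, hw1⟩, hwy.symm⟩
  · rintro ⟨c, ⟨hc0, hc1⟩, hcy⟩; exact ⟨c, hc0, by simp, hc1, hcy.symm⟩

lemma mem_affineSpan_range_iff {k d : ℕ} (x : Fin k → E d) (y : E d) :
    y ∈ affineSpan ℝ (Set.range x) ↔ ∃ c : Fin k → ℝ, ∑ i, c i = 1 ∧ y = ∑ i, c i • x i := by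
  classical
  rw [mem_affineSpan_iff_eq_affineCombination]
  constructor
  · rintro ⟨t, w, hw1, rfl⟩
    refine ⟨fun i => if i ∈ t then w i else 0, ?_, ?_⟩
    · rw [Finset.sum_ite_mem, Finset.univ_inter, hw1]
    · rw [affineCombination_eq_linear_combination t _ _ hw1]
      rw [Finset.sum_congr rfl (fun i (_ : i ∈ Finset.univ) =>
        show (if i ∈ t then w i else 0) • x i = if i ∈ t then w i • x i else 0 by
          split_ifs <;> simp)]
      rw [Finset.sum_ite_mem, Finset.univ_inter]
  · rintro ⟨c, hc1, rfl⟩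
    refine ⟨Finset.univ, c, hc1, ?_⟩
    rw [affineCombination_eq_linear_combination _ _ _ hc1]

lemma measurableSet_affineSpan_event {k d : ℕ} :
    MeasurableSet {p : (Fin k → E d) × E d | p.2 ∈ affineSpan ℝ (Set.range p.1)} := by
  have : {p : (Fin k → E d) × E d | p.2 ∈ affineSpan ℝ (Set.range p.1)}
      = ⋃ N : ℕ, {p : (Fin k → E d) × E d |
          ∃ c ∈ ({c : Fin k → ℝ | ∑ i, c i = 1} ∩
            Set.Icc (fun _ => -(N : ℝ)) (fun _ => (N : ℝ))), p.2 = ∑ i, c i • p.1 i} := by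
    ext p
    simp only [Set.mem_setOf_eq, Set.mem_iUnion, mem_affineSpan_range_iff]
    constructor
    · rintro ⟨c, hc1, hcy⟩
      obtain ⟨N, hN⟩ := exists_nat_ge (∑ i, |c i|)
      refine ⟨N, c, ⟨hc1, fun i => ?_, fun i => ?_⟩, hcy⟩
      · exact neg_le_of_abs_le <| le_trans (Finset.single_le_sum (f := fun i => |c i|)
          (fun i _ => abs_nonneg _) (Finset.mem_univ i)) hN
      · exact le_of_abs_le <| le_trans (Finset.single_le_sum (f := fun i => |c i|)
          (fun i _ => abs_nonneg _) (Finset.mem_univ i)) hN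
    · rintro ⟨N, c, ⟨hc1, _⟩, hcy⟩; exact ⟨c, hc1, hcy⟩
  rw [this]
  refine MeasurableSet.iUnion fun N => ?_
  refine (isClosed_combo ?_).measurableSet
  refine IsCompact.of_isClosed_subset (isCompact_Icc (a := fun _ => -(N:ℝ)) (b := fun _ => (N:ℝ)))
    (IsClosed.inter (isClosed_eq (by continuity) continuous_const) isClosed_Icc)
    Set.inter_subset_right

lemma mem_extremePoints_convexHull_iff {d : ℕ} {A : Set (E d)} {y : E d} (hy : y ∈ A) :
    y ∈ Set.extremePoints ℝ (convexHull ℝ A) ↔ y ∉ convexHull ℝ (A \ {y}) := by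
  constructor
  · intro h hmem
    have h2 := ((convex_convexHull ℝ A).mem_extremePoints_iff_mem_diff_convexHull_diff).mp h
    exact h2.2 (convexHull_mono (Set.diff_subset_diff_left (subset_convexHull ℝ A)) hmem)
  · intro h
    rcases Set.eq_empty_or_nonempty (A \ {y}) with he | hne
    · have hA : A = {y} := subset_antisymm
        (fun a ha => by by_contra hne'; exact (Set.eq_empty_iff_forall_notMem.mp he) a ⟨ha, hne'⟩)
        (by simpa using hy)
      rw [hA, convexHull_singleton]
      rw [mem_extremePoints_iff_forall_segment]
      exact ⟨rfl, fun x₁ h₁ x₂ h₂ _ => Or.inl h₁⟩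
    · rw [mem_extremePoints_iff_forall_segment]
      refine ⟨subset_convexHull ℝ A hy, ?_⟩
      intro x₁ h₁ x₂ h₂ hseg
      have hA : A = insert y (A \ {y}) := by
        rw [Set.insert_diff_singleton, Set.insert_eq_self.mpr hy]
      rw [hA, convexHull_insert hne] at h₁ h₂
      obtain ⟨y₁, hy₁, z₁, hz₁, hx₁⟩ := mem_convexJoin.mp h₁
      obtain ⟨y₂, hy₂, z₂, hz₂, hx₂⟩ := mem_convexJoin.mp h₂
      rw [Set.mem_singleton_iff] at hy₁ hy₂
      rw [hy₁] at hx₁; rw [hy₂] at hx₂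
      obtain ⟨a₁, b₁, ha₁, hb₁, hab₁, hx₁⟩ := hx₁
      obtain ⟨a₂, b₂, ha₂, hb₂, hab₂, hx₂⟩ := hx₂
      obtain ⟨t1, t2, ht1, ht2, ht12, hyseg⟩ := hseg
      set c := t1 * b₁ + t2 * b₂ with hc
      rcases eq_or_lt_of_le (show (0:ℝ) ≤ c by positivity) with hc0 | hcpos
      · -- degenerate case
        have h0 : t1 * b₁ = 0 ∧ t2 * b₂ = 0 :=
          (add_eq_zero_iff_of_nonneg (by positivity) (by positivity)).mp hc0.symm
        rcases eq_or_lt_of_le ht1 with ht10 | ht1pos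
        · right
          have ht2' : t2 = 1 := by linarith
          have hb2' : b₂ = 0 := by
            rcases mul_eq_zero.mp h0.2 with h' | h'
            · exact absurd h' (by rw [ht2']; norm_num)
            · exact h'
          have ha2' : a₂ = 1 := by linarith
          rw [← hx₂, hb2', ha2', one_smul, zero_smul, add_zero]
        · left
          have hb1' : b₁ = 0 := by
            rcases mul_eq_zero.mp h0.1 with h' | h'
            · exact absurd h' (by linarith)
            · exact h'
          have ha1' : a₁ = 1 := by linarith
          rw [← hx₁, hb1', ha1', one_smul, zero_smul, add_zero]
      · exfalso
        have hy' : (t1*a₁+t2*a₂) • y + ((t1*b₁) • z₁ + (t2*b₂) • z₂) = y := by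
          linear_combination (norm := module) hyseg + t1 • hx₁ + t2 • hx₂
        have ha₁' : a₁ = 1 - b₁ := by linarith
        have ha₂' : a₂ = 1 - b₂ := by linarith
        have hsc : t1*a₁+t2*a₂ = 1 - c := by rw [ha₁', ha₂', hc]; linarith
        rw [hsc] at hy'
        have hkey : c • y = (t1*b₁) • z₁ + (t2*b₂) • z₂ := by
          linear_combination (norm := module) -hy'
        have hy3 : y = (c⁻¹*(t1*b₁)) • z₁ + (c⁻¹*(t2*b₂)) • z₂ := by
          rw [show (c⁻¹*(t1*b₁)) • z₁ + (c⁻¹*(t2*b₂)) • z₂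
              = c⁻¹ • ((t1*b₁) • z₁ + (t2*b₂) • z₂) by module,
            ← hkey, smul_smul, inv_mul_cancel₀ hcpos.ne', one_smul]
        have hp1 : 0 ≤ c⁻¹*(t1*b₁) := by positivity
        have hp2 : 0 ≤ c⁻¹*(t2*b₂) := by positivity
        have hsum : c⁻¹*(t1*b₁) + c⁻¹*(t2*b₂) = 1 := by
          rw [← mul_add, ← hc, inv_mul_cancel₀ hcpos.ne']
        refine h ?_
        nth_rewrite 2 [hy3]
        exact (convex_convexHull ℝ (A \ {y})) hz₁ hz₂ hp1 hp2 hsum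

/-- General position: no point is in the affine span of `d` others. -/
def genPos {d n : ℕ} (x : Fin n → E d) : Prop :=
  ∀ (i : Fin n) (t : Finset (Fin n)), t.card = d → i ∉ t → x i ∉ affineSpan ℝ (x '' ↑t)

lemma genPos.injective {d : ℕ} (hd : 1 ≤ d) {x : Fin (d + 2) → E d} (hx : genPos x) :
    Function.Injective x := by
  intro i j hij
  by_contra hne
  obtain ⟨t, hjt, hti, htc⟩ := Finset.exists_subsuperset_card_eq
    (show {j} ⊆ Finset.univ.erase i by simp [Ne.symm hne])
    (by simpa using hd) (by simp [Finset.card_erase_of_mem])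
  refine hx i t htc (fun hit => (Finset.mem_erase.mp (hti hit)).1 rfl) ?_
  refine mem_affineSpan ℝ ⟨j, hjt (Finset.mem_singleton_self j), hij.symm⟩

private lemma sum_ite_pair {n : ℕ} {M : Type*} [AddCommGroup M] {i j : Fin n} (hij : i ≠ j)
    (f : Fin n → M) :
    ∑ k, (if k = i ∨ k = j then 0 else f k) = (∑ k, f k) - f i - f j := by
  have h : ∀ k, (if k = i ∨ k = j then (0:M) else f k)
      = f k - (if k = i then f k else 0) - (if k = j then f k else 0) := by
    intro k
    rcases eq_or_ne k i with rfl | hki <;> rcases eq_or_ne k j with rfl | hkj <;> simp_all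
  rw [Finset.sum_congr rfl fun k _ => h k, Finset.sum_sub_distrib, Finset.sum_sub_distrib,
    Finset.sum_ite_eq' Finset.univ i f, Finset.sum_ite_eq' Finset.univ j f,
    if_pos (Finset.mem_univ i), if_pos (Finset.mem_univ j)]

lemma genPos.at_most_one {d : ℕ} (hd : 1 ≤ d) {x : Fin (d + 2) → E d} (hx : genPos x)
    {i j : Fin (d + 2)} (hij : i ≠ j)
    (hi : x i ∈ convexHull ℝ (x '' ↑({i}ᶜ : Finset (Fin (d + 2)))))
    (hj : x j ∈ convexHull ℝ (x '' ↑({j}ᶜ : Finset (Fin (d + 2))))) : False := by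
  classical
  obtain ⟨a, ha0, has, ha1, hax⟩ := (mem_convexHull_image_iff x _ _).mp hi
  obtain ⟨b, hb0, hbs, hb1, hbx⟩ := (mem_convexHull_image_iff x _ _).mp hj
  have hai : a i = 0 := has i (by simp)
  have hbj : b j = 0 := hbs j (by simp)
  set β := a j * b i with hβ
  have haj1 : a j ≤ 1 := by
    rw [← ha1]
    exact Finset.single_le_sum (fun k _ => ha0 k) (Finset.mem_univ j)
  have hbi1 : b i ≤ 1 := by
    rw [← hb1]
    exact Finset.single_le_sum (fun k _ => hb0 k) (Finset.mem_univ i)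
  rcases lt_or_ge β 1 with hβlt | hβge
  · -- x i is in the hull of the d points indexed by {i,j}ᶜ
    have hpos : (0:ℝ) < 1 - β := by linarith
    set w : Fin (d + 2) → ℝ := fun k => if k = i ∨ k = j then 0 else (1-β)⁻¹ * (a k + a j * b k)
      with hw
    have hmem : x i ∈ convexHull ℝ (x '' ↑(({i, j}ᶜ : Finset (Fin (d + 2))))) := by
      rw [mem_convexHull_image_iff]
      refine ⟨w, ?_, ?_, ?_, ?_⟩
      · intro k; rw [hw]; dsimp only; split_ifs
        · exact le_rfl
        · have := ha0 k; have := hb0 k; have := ha0 j; positivity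
      · intro k hk
        rw [Finset.mem_compl, not_not, Finset.mem_insert, Finset.mem_singleton] at hk
        rw [hw]; dsimp only; rw [if_pos hk]
      · have : ∀ k, w k = if k = i ∨ k = j then 0 else (1-β)⁻¹ * (a k + a j * b k) := fun k => rfl
        calc ∑ k, w k
            = (∑ k, (1-β)⁻¹ * (a k + a j * b k)) - (1-β)⁻¹ * (a i + a j * b i)
              - (1-β)⁻¹ * (a j + a j * b j) := by
              rw [← sum_ite_pair hij (fun k => (1-β)⁻¹ * (a k + a j * b k))]
          _ = (1-β)⁻¹ * ((1 + a j) - (a i + a j * b i) - (a j + a j * b j)) := by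
              rw [← Finset.mul_sum, Finset.sum_add_distrib, ← Finset.mul_sum, ha1, hb1]
              ring
          _ = 1 := by
              rw [hai, hbj, hβ]
              rw [show (1 + a j) - (0 + a j * b i) - (a j + a j * 0) = 1 - a j * b i by ring]
              exact inv_mul_cancel₀ (by rw [← hβ]; exact hpos.ne')
      · calc ∑ k, w k • x k
            = (1-β)⁻¹ • ((∑ k, (a k + a j * b k) • x k) - (a i + a j * b i) • x i
              - (a j + a j * b j) • x j) := by
              rw [← sum_ite_pair hij (fun k => (a k + a j * b k) • x k), Finset.smul_sum]
              refine Finset.sum_congr rfl fun k _ => ?_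
              rw [hw]; dsimp only; split_ifs
              · simp
              · exact mul_smul _ _ _
          _ = x i := by
              have hsum : ∑ k, (a k + a j * b k) • x k = x i + a j • x j := by
                simp only [add_smul, mul_smul, Finset.sum_add_distrib, ← Finset.smul_sum,
                  hax, hbx]
              rw [hsum, hai, hbj]
              rw [show x i + a j • x j - (0 + a j * b i) • x i - (a j + a j * 0) • x j
                  = (1 - a j * b i) • x i by module, ← hβ, smul_smul,
                inv_mul_cancel₀ hpos.ne', one_smul]
    have hcard : ({i, j}ᶜ : Finset (Fin (d + 2))).card = d := by
      rw [Finset.card_compl, Finset.card_insert_of_notMem (by simpa using hij),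
        Finset.card_singleton]
      simp
    refine hx i _ hcard (by simp) (convexHull_subset_affineSpan _ hmem)
  · -- β = 1 forces x i = x j
    have haj : a j = 1 := by nlinarith [ha0 j, hb0 i]
    have hbi : b i = 1 := by nlinarith [ha0 j, hb0 i]
    have hzero : ∀ k ∈ Finset.univ.erase j, a k = 0 := by
      have hs : ∑ k ∈ Finset.univ.erase j, a k = 0 := by
        have := Finset.add_sum_erase Finset.univ a (Finset.mem_univ j)
        rw [← ha1] at haj
        linarith [haj, this]
      intro k hk
      exact (Finset.sum_eq_zero_iff_of_nonneg (fun k _ => ha0 k)).mp hs k hk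
    have : x i = x j := by
      rw [← hax, Finset.sum_eq_single j (fun k _ hk => by
        rw [hzero k (Finset.mem_erase.mpr ⟨hk, Finset.mem_univ k⟩), zero_smul])
        (fun h => absurd (Finset.mem_univ j) h), haj, one_smul]
    exact hij (hx.injective hd this)

lemma coe_compl_singleton {n : ℕ} (i : Fin n) :
    (↑({i}ᶜ : Finset (Fin n)) : Set (Fin n)) = ({i} : Set (Fin n))ᶜ := by
  rw [Finset.coe_compl, Finset.coe_singleton]

lemma genPos.count {d : ℕ} (hd : 1 ≤ d) {x : Fin (d + 2) → E d} (hx : genPos x) :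
    (Set.extremePoints ℝ (convexHull ℝ (Set.range x))).ncard = d + 1 ↔
      ∃ i, x i ∈ convexHull ℝ (x '' ({i} : Set (Fin (d + 2)))ᶜ) := by
  classical
  have hinj := hx.injective hd
  have himg : ∀ i : Fin (d + 2), Set.range x \ {x i} = x '' ({i} : Set (Fin (d + 2)))ᶜ := by
    intro i
    rw [← Set.image_univ, ← Set.image_singleton (f := x) (a := i), ← Set.image_diff hinj,
      Set.compl_eq_univ_diff]
  set T := {i : Fin (d + 2) | x i ∈ convexHull ℝ (x '' ({i} : Set (Fin (d + 2)))ᶜ)} with hT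
  have hext : Set.extremePoints ℝ (convexHull ℝ (Set.range x)) = x '' Tᶜ := by
    ext y
    constructor
    · intro hy
      obtain ⟨i, rfl⟩ := extremePoints_convexHull_subset hy
      refine ⟨i, fun hiT => ?_, rfl⟩
      exact ((mem_extremePoints_convexHull_iff (Set.mem_range_self i)).mp hy) (himg i ▸ hiT)
    · rintro ⟨i, hiT, rfl⟩
      exact (mem_extremePoints_convexHull_iff (Set.mem_range_self i)).mpr
        (fun hmem => hiT (by rw [hT, Set.mem_setOf_eq, ← himg i]; exact hmem))
  rw [hext]
  have hTsub : T.Subsingleton := by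
    intro i hi j hj
    by_contra hij
    refine hx.at_most_one hd hij ?_ ?_
    · rw [coe_compl_singleton]; exact hi
    · rw [coe_compl_singleton]; exact hj
  rcases hTsub.eq_empty_or_singleton with h0 | ⟨i, h1⟩
  · rw [h0, Set.compl_empty, Set.image_univ]
    have : (Set.range x).ncard = d + 2 := by
      rw [← Set.image_univ, Set.ncard_image_of_injective _ hinj, Set.ncard_univ, Nat.card_eq_fintype_card,
        Fintype.card_fin]
    rw [this]
    rw [show (d + 2 = d + 1) ↔ False by simp]
    constructor
    · exact False.elim
    · rintro ⟨i, hi⟩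
      exact absurd (show i ∈ T from hi) (by rw [h0]; exact Set.notMem_empty i)
  · rw [h1]
    have : (x '' ({i} : Set (Fin (d + 2)))ᶜ).ncard = d + 1 := by
      rw [Set.ncard_image_of_injective _ hinj, ← coe_compl_singleton, Set.ncard_coe_finset,
        Finset.card_compl, Finset.card_singleton, Fintype.card_fin]
      omega
    rw [this]
    exact iff_of_true rfl ⟨i, show i ∈ T by rw [h1]; exact rfl⟩

section MeasureAux

variable {d : ℕ} (μ : Measure (E d)) [IsProbabilityMeasure μ]

/-- the "convex position" set in the product space -/
def Sconv (d : ℕ) : Set (E d × (Fin (d + 1) → E d)) :=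
  {q | q.1 ∈ convexHull ℝ (Set.range q.2)}

lemma isClosed_Sconv : IsClosed (Sconv d) := by
  have h := isClosed_convexHull_event (k := d + 1) (d := d)
  have : Sconv d = (fun q : E d × (Fin (d + 1) → E d) => (q.2, q.1)) ⁻¹'
      {p : (Fin (d + 1) → E d) × E d | p.2 ∈ convexHull ℝ (Set.range p.1)} := rfl
  rw [this]
  exact h.preimage (continuous_snd.prodMk continuous_fst)

lemma measurableSet_Sconv : MeasurableSet (Sconv d) := (isClosed_Sconv).measurableSet

lemma piFinSuccAbove_eq (i : Fin (d + 2)) (x : Fin (d + 2) → E d) :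
    (MeasurableEquiv.piFinSuccAbove (fun _ : Fin (d + 2) => E d) i) x
      = (x i, fun j => x (i.succAbove j)) := rfl

lemma B_preimage (i : Fin (d + 2)) :
    {x : Fin (d + 2) → E d | x i ∈ convexHull ℝ (x '' ({i} : Set (Fin (d + 2)))ᶜ)}
      = (MeasurableEquiv.piFinSuccAbove (fun _ : Fin (d + 2) => E d) i) ⁻¹' (Sconv d) := by
  ext x
  simp only [Set.mem_preimage, piFinSuccAbove_eq, Sconv, Set.mem_setOf_eq]
  rw [show Set.range (fun j => x (i.succAbove j)) = x '' Set.range i.succAbove from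
    (Set.range_comp x i.succAbove).symm ▸ rfl, Fin.range_succAbove]

lemma measure_B (i : Fin (d + 2)) :
    (Measure.pi fun _ : Fin (d + 2) => μ)
        {x | x i ∈ convexHull ℝ (x '' ({i} : Set (Fin (d + 2)))ᶜ)}
      = (μ.prod (Measure.pi fun _ : Fin (d + 1) => μ)) (Sconv d) := by
  rw [B_preimage]
  exact (measurePreserving_piFinSuccAbove (fun _ : Fin (d + 2) => μ) i).measure_preimage
    (measurableSet_Sconv).nullMeasurableSet

lemma prod_Sconv :
    (μ.prod (Measure.pi fun _ : Fin (d + 1) => μ)) (Sconv d)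
      = ∫⁻ r, μ (convexHull ℝ (Set.range r)) ∂(Measure.pi fun _ : Fin (d + 1) => μ) := by
  rw [Measure.prod_apply_symm measurableSet_Sconv]
  rfl

end MeasureAux

section NullAux

variable {d : ℕ} (μ : Measure (E d)) [IsProbabilityMeasure μ]

lemma affineSpan_ne_top (hd : 1 ≤ d) {k : ℕ} (hk : k ≤ d) (r : Fin (d + 1) → E d) (g : Fin k → Fin (d + 1)) :
    affineSpan ℝ (Set.range (fun j => r (g j))) ≠ ⊤ := by
  intro htop
  rcases Nat.eq_zero_or_pos k with rfl | hkpos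
  · -- empty family: span is ⊥
    have : (Set.range fun j : Fin 0 => r (g j)) = ∅ := Set.range_eq_empty _
    rw [this] at htop
    simp only [AffineSubspace.span_empty] at htop
    exact AffineSubspace.notMem_bot ℝ (E d) 0 (htop.symm ▸ AffineSubspace.mem_top ℝ (E d) 0)
  · have hfr : Module.finrank ℝ (vectorSpan ℝ (Set.range fun j => r (g j))) ≤ k - 1 :=
      finrank_vectorSpan_range_le ℝ _ (by simp [Fintype.card_fin]; omega)
    have : (affineSpan ℝ (Set.range fun j => r (g j))).direction = ⊤ := by
      rw [htop]; exact AffineSubspace.direction_top ℝ _ _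
    rw [direction_affineSpan] at this
    rw [this] at hfr
    have : Module.finrank ℝ (⊤ : Submodule ℝ (E d)) = d := by
      rw [finrank_top]; exact finrank_euclideanSpace_fin
    omega

lemma measure_affineSpan_zero (hμ : μ ≪ volume) (hd : 1 ≤ d) {k : ℕ} (hk : k ≤ d)
    (r : Fin (d + 1) → E d) (g : Fin k → Fin (d + 1)) :
    μ {y : E d | y ∈ affineSpan ℝ (Set.range (fun j => r (g j)))} = 0 := by
  refine hμ ?_
  have h := Measure.addHaar_affineSubspace volume
    (affineSpan ℝ (Set.range (fun j => r (g j)))) (affineSpan_ne_top hd hk r g)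
  exact h

lemma measurableSet_affine_pre (i : Fin (d + 2)) (t : Finset (Fin (d + 2))) (htc : t.card = d) :
    MeasurableSet {x : Fin (d + 2) → E d | x i ∈ affineSpan ℝ (x '' ↑t)} := by
  classical
  have himg : ∀ x : Fin (d + 2) → E d,
      x '' ↑t = Set.range (fun j : Fin d => x (t.orderEmbOfFin htc j)) := by
    intro x
    rw [show (fun j : Fin d => x (t.orderEmbOfFin htc j)) = x ∘ (t.orderEmbOfFin htc) from rfl,
      Set.range_comp, Finset.range_orderEmbOfFin]
  have : {x : Fin (d + 2) → E d | x i ∈ affineSpan ℝ (x '' ↑t)}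
      = (fun x : Fin (d + 2) → E d => ((fun j : Fin d => x (t.orderEmbOfFin htc j)), x i)) ⁻¹'
        {p : (Fin d → E d) × E d | p.2 ∈ affineSpan ℝ (Set.range p.1)} := by
    ext x; simp only [Set.mem_preimage, Set.mem_setOf_eq, himg x]
  rw [this]
  exact measurableSet_affineSpan_event.preimage
    ((measurable_pi_lambda _ fun j => measurable_pi_apply _).prodMk (measurable_pi_apply i))

lemma null_affine_event (hd : 1 ≤ d) (hμ : μ ≪ volume) (i : Fin (d + 2))
    (t : Finset (Fin (d + 2))) (htc : t.card = d) (hit : i ∉ t) :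
    (Measure.pi fun _ : Fin (d + 2) => μ) {x | x i ∈ affineSpan ℝ (x '' ↑t)} = 0 := by
  classical
  set e := MeasurableEquiv.piFinSuccAbove (fun _ : Fin (d + 2) => E d) i with he
  have hne : ∀ j : Fin d, (t.orderEmbOfFin htc j : Fin (d + 2)) ≠ i := fun j h =>
    hit (h ▸ Finset.orderEmbOfFin_mem t htc j)
  set g : Fin d → Fin (d + 1) := fun j => (Fin.exists_succAbove_eq (hne j)).choose with hg
  have hsa : ∀ j, i.succAbove (g j) = t.orderEmbOfFin htc j := fun j =>
    (Fin.exists_succAbove_eq (hne j)).choose_spec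
  set S' : Set (E d × (Fin (d + 1) → E d)) :=
    {q | q.1 ∈ affineSpan ℝ (Set.range (fun j => q.2 (g j)))} with hS'
  have hpre : {x : Fin (d + 2) → E d | x i ∈ affineSpan ℝ (x '' ↑t)} = e ⁻¹' S' := by
    ext x
    have himg : x '' ↑t = Set.range (fun j : Fin d => x (t.orderEmbOfFin htc j)) := by
      rw [show (fun j : Fin d => x (t.orderEmbOfFin htc j)) = x ∘ (t.orderEmbOfFin htc) from rfl,
        Set.range_comp, Finset.range_orderEmbOfFin]
    simp only [Set.mem_preimage, Set.mem_setOf_eq, himg, he, piFinSuccAbove_eq, hS']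
    have : (fun j => x (i.succAbove (g j))) = fun j : Fin d => x (t.orderEmbOfFin htc j) := by
      funext j; rw [hsa j]
    rw [this]
  have hS'm : MeasurableSet S' := by
    have : S' = (fun q : E d × (Fin (d + 1) → E d) => ((fun j => q.2 (g j)), q.1)) ⁻¹'
        {p : (Fin d → E d) × E d | p.2 ∈ affineSpan ℝ (Set.range p.1)} := rfl
    rw [this]
    exact measurableSet_affineSpan_event.preimage
      ((measurable_pi_lambda _ fun j => (measurable_pi_apply _).comp measurable_snd).prodMk
        measurable_fst)
  rw [hpre,
    (measurePreserving_piFinSuccAbove (fun _ : Fin (d + 2) => μ) i).measure_preimage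
      hS'm.nullMeasurableSet,
    Measure.prod_apply_symm hS'm]
  have : ∀ r : Fin (d + 1) → E d, μ ((fun y => (y, r)) ⁻¹' S') = 0 := by
    intro r
    exact measure_affineSpan_zero μ hμ hd (le_refl d) r g
  simp only [this, lintegral_zero]

end NullAux

/-- Sylvester's probability as an expectation: for `d+2` i.i.d. points with an absolutely
continuous distribution `μ` on `ℝ^d`, the probability that the convex hull is a simplex
(i.e. has exactly `d+1` vertices) equals `(d+2)·E[μ([X_1,…,X_{d+1}])]`. -/
theorem sylvester_as_expectation (d : ℕ) (hd : 1 ≤ d) (μ : Measure (E d))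
    [IsProbabilityMeasure μ] (hμ : μ ≪ volume) :
    ((Measure.pi fun _ : Fin (d + 2) => μ)
        {x | (Set.extremePoints ℝ (convexHull ℝ (Set.range x))).ncard = d + 1}).toReal
      = (d + 2) * ∫ x : Fin (d + 1) → E d,
          (μ (convexHull ℝ (Set.range x))).toReal ∂(Measure.pi fun _ : Fin (d + 1) => μ) := by
  classical
  set ν := Measure.pi fun _ : Fin (d + 2) => μ with hν
  set ν₁ := Measure.pi fun _ : Fin (d + 1) => μ with hν₁
  set B : Fin (d + 2) → Set (Fin (d + 2) → E d) :=
    fun i => {x | x i ∈ convexHull ℝ (x '' ({i} : Set (Fin (d + 2)))ᶜ)} with hB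
  set N : Set (Fin (d + 2) → E d) :=
    ⋃ (i : Fin (d + 2)), ⋃ (t : Finset (Fin (d + 2))), ⋃ (_ : t.card = d ∧ i ∉ t),
      {x | x i ∈ affineSpan ℝ (x '' ↑t)} with hNdef
  have hNnull : ν N = 0 := by
    rw [hNdef]
    refine measure_iUnion_null fun i => measure_iUnion_null fun t =>
      measure_iUnion_null fun ht => ?_
    exact null_affine_event μ hd hμ i t ht.1 ht.2
  have hNmeas : MeasurableSet N := by
    rw [hNdef]
    exact MeasurableSet.iUnion fun i => MeasurableSet.iUnion fun t =>
      MeasurableSet.iUnion fun ht => measurableSet_affine_pre i t ht.1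
  have hgp : ∀ x ∉ N, genPos x := by
    intro x hx i t htc hit hmem
    exact hx (hNdef ▸ Set.mem_iUnion.mpr
      ⟨i, Set.mem_iUnion.mpr ⟨t, Set.mem_iUnion.mpr ⟨⟨htc, hit⟩, hmem⟩⟩⟩)
  have hBmeas : ∀ i, MeasurableSet (B i) := by
    intro i
    rw [hB]; dsimp only; rw [B_preimage i]
    exact (measurableSet_Sconv).preimage (MeasurableEquiv.measurable _)
  have hiff : ∀ x ∉ N,
      ((Set.extremePoints ℝ (convexHull ℝ (Set.range x))).ncard = d + 1 ↔ x ∈ ⋃ i, B i) := by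
    intro x hx
    rw [(hgp x hx).count hd]
    simp only [Set.mem_iUnion, hB, Set.mem_setOf_eq]
  have hae : {x : Fin (d + 2) → E d |
      (Set.extremePoints ℝ (convexHull ℝ (Set.range x))).ncard = d + 1} =ᵐ[ν] ⋃ i, B i := by
    rw [MeasureTheory.ae_eq_set]
    constructor
    · refine measure_mono_null (fun x hx => ?_) hNnull
      by_contra hxN
      exact hx.2 ((hiff x hxN).mp hx.1)
    · refine measure_mono_null (fun x hx => ?_) hNnull
      by_contra hxN
      exact hx.2 ((hiff x hxN).mpr hx.1)
  have hae2 : (⋃ i, B i) =ᵐ[ν] ⋃ i, (B i \ N) := by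
    rw [MeasureTheory.ae_eq_set]
    constructor
    · refine measure_mono_null (fun x hx => ?_) hNnull
      by_contra hxN
      obtain ⟨_, ⟨i, rfl⟩, hxBi⟩ := hx.1
      exact hx.2 (Set.mem_iUnion.mpr ⟨i, hxBi, hxN⟩)
    · refine measure_mono_null (fun x hx => ?_) hNnull
      obtain ⟨_, ⟨i, rfl⟩, hxBi⟩ := hx.1
      exact absurd (Set.mem_iUnion.mpr ⟨i, hxBi.1⟩) hx.2
  have hdisj : Pairwise (Function.onFun Disjoint fun i => B i \ N) := by
    intro i j hij
    rw [Function.onFun, Set.disjoint_left]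
    rintro x ⟨hxi, hxN⟩ ⟨hxj, _⟩
    refine (hgp x hxN).at_most_one hd hij ?_ ?_
    · rw [coe_compl_singleton]; exact hxi
    · rw [coe_compl_singleton]; exact hxj
  have h2 : ν (⋃ i, B i \ N) = ∑ i, ν (B i \ N) := by
    rw [measure_iUnion hdisj (fun i => (hBmeas i).diff hNmeas), tsum_fintype]
  have h3 : ∀ i, ν (B i \ N) = ν (B i) := fun i => measure_diff_null hNnull
  have h4 : ∀ i : Fin (d + 2), ν (B i) = (μ.prod ν₁) (Sconv d) := fun i => measure_B μ i
  have hcount : ν {x | (Set.extremePoints ℝ (convexHull ℝ (Set.range x))).ncard = d + 1}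
      = (d + 2) * (μ.prod ν₁) (Sconv d) := by
    rw [measure_congr hae, measure_congr hae2, h2]
    simp only [h3, h4, Finset.sum_const, Finset.card_univ, Fintype.card_fin, nsmul_eq_mul,
      Nat.cast_add, Nat.cast_ofNat]
  have hIm : Measurable fun r : Fin (d + 1) → E d => μ (convexHull ℝ (Set.range r)) := by
    have h := measurable_measure_prodMk_right (μ := μ) (measurableSet_Sconv (d := d))
    exact h
  have hint : ∫ r, (μ (convexHull ℝ (Set.range r))).toReal ∂ν₁
      = ((μ.prod ν₁) (Sconv d)).toReal := by
    rw [prod_Sconv μ, ← integral_toReal hIm.aemeasurable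
      (Filter.Eventually.of_forall fun r => measure_lt_top μ _)]
  rw [hcount, hint, ENNReal.toReal_mul]
  congr 1
end
end

section
/- Orthogonal projection of the beta prime distribution: if $Y$ is a random point in $\mathbb{R}^{d+1}$ with density proportional to $(1+\|y\|^2)^{-(\beta+1/2)}$ (where $\beta>d/2$), and $H\subset\mathbb{R}^{d+1}$ is any linear hyperplane, then $\Pi_H(Y)$ has the $d$-dimensional beta prime distribution on $H$ with density proportional to $(1+\|x\|^2)^{-\beta}$. -/
open MeasureTheory Metric

noncomputable section

set_option synthInstance.maxHeartbeats 400000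
set_option maxHeartbeats 1000000

section BetaPrimeProjAux

open Real Set

lemma aux_gamma_int' {a r : ℝ} (ha : 0 < a) (hr : 0 < r) :
    ENNReal.ofReal (r ^ (-a) * Real.Gamma a)
      = ∫⁻ u in Ioi (0:ℝ), ENNReal.ofReal (u ^ (a-1) * Real.exp (-(r * u))) := by
  have hint : IntegrableOn (fun u : ℝ => u ^ (a-1) * Real.exp (-(r * u))) (Ioi 0) := by
    simpa [Real.rpow_one, neg_mul] using
      integrableOn_rpow_mul_exp_neg_mul_rpow (by linarith : (-1:ℝ) < a - 1) zero_lt_one hr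
  rw [← ofReal_integral_eq_lintegral_ofReal hint ?_]
  · rw [Real.integral_rpow_mul_exp_neg_mul_Ioi ha hr]
    congr 1
    rw [one_div, Real.rpow_neg hr.le, Real.inv_rpow hr.le]
  · filter_upwards [ae_restrict_mem measurableSet_Ioi] with u hu
    have : (0:ℝ) < u := hu
    positivity

lemma lint_key' {a b : ℝ} (ha : 1/2 < a) (hb : 0 < b) :
    (∫⁻ t : ℝ, ENNReal.ofReal ((b + t^2) ^ (-a)))
      = ENNReal.ofReal (Real.sqrt π * Real.Gamma (a - 1/2) / Real.Gamma a * b ^ ((1:ℝ)/2 - a)) := by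
  have ha0 : 0 < a := by linarith
  have hGa : 0 < Real.Gamma a := Real.Gamma_pos_of_pos ha0
  have hGa2 : 0 < Real.Gamma (a - 1/2) := Real.Gamma_pos_of_pos (by linarith)
  rw [← ENNReal.mul_right_inj (a := ENNReal.ofReal (Real.Gamma a))
    (by simp [ENNReal.ofReal_eq_zero, not_le, hGa]) ENNReal.ofReal_ne_top]
  have hae : ∀ᵐ p : ℝ × ℝ ∂(volume.prod (volume.restrict (Ioi (0:ℝ)))), 0 < p.2 := by
    rw [ae_iff]
    have h1 : {p : ℝ × ℝ | ¬ 0 < p.2} = Set.univ ×ˢ (Iic (0:ℝ)) := by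
      ext p; simp [not_lt]
    rw [h1, Measure.prod_prod, Measure.restrict_apply measurableSet_Iic]
    simp [Iic_inter_Ioi]
  have hmeas : AEMeasurable (Function.uncurry fun (t u : ℝ) =>
      ENNReal.ofReal (u ^ (a-1) * Real.exp (-((b + t^2) * u))))
      (volume.prod (volume.restrict (Ioi (0:ℝ)))) := by
    have hg : Measurable (fun p : ℝ × ℝ =>
        ENNReal.ofReal (Real.exp (Real.log p.2 * (a-1)) * Real.exp (-((b + p.1^2) * p.2)))) := by
      exact (((Real.measurable_log.comp measurable_snd).mul_const _).exp.mul
        (((measurable_const.add (measurable_fst.pow_const 2)).mul measurable_snd).neg.exp)).ennreal_ofReal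
    refine hg.aemeasurable.congr ?_
    filter_upwards [hae] with p hp
    simp [Function.uncurry, Real.rpow_def_of_pos hp]
  calc ENNReal.ofReal (Real.Gamma a) * ∫⁻ t : ℝ, ENNReal.ofReal ((b + t^2) ^ (-a))
      = ∫⁻ t : ℝ, ENNReal.ofReal ((b + t^2) ^ (-a) * Real.Gamma a) := by
        rw [← lintegral_const_mul' _ _ ENNReal.ofReal_ne_top]
        congr 1; funext t
        rw [ENNReal.ofReal_mul (by positivity), mul_comm]
    _ = ∫⁻ t : ℝ, ∫⁻ u in Ioi (0:ℝ), ENNReal.ofReal (u ^ (a-1) * Real.exp (-((b + t^2) * u))) := by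
        congr 1; funext t
        exact aux_gamma_int' ha0 (by positivity)
    _ = ∫⁻ u in Ioi (0:ℝ), ∫⁻ t : ℝ, ENNReal.ofReal (u ^ (a-1) * Real.exp (-((b + t^2) * u))) :=
        lintegral_lintegral_swap hmeas
    _ = ∫⁻ u in Ioi (0:ℝ), ENNReal.ofReal (Real.sqrt π) *
          ENNReal.ofReal (u ^ (a - 1/2 - 1) * Real.exp (-(b * u))) := by
        refine setLIntegral_congr_fun measurableSet_Ioi (fun u hu => ?_)
        have hu : (0:ℝ) < u := hu
        have h1 : ∀ t : ℝ, u ^ (a-1) * Real.exp (-((b + t^2) * u))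
            = (u ^ (a-1) * Real.exp (-(b*u))) * Real.exp (-(u * t^2)) := by
          intro t
          rw [mul_assoc, ← Real.exp_add]
          ring_nf
        simp_rw [h1]
        rw [show (fun t : ℝ => ENNReal.ofReal ((u ^ (a-1) * Real.exp (-(b*u))) * Real.exp (-(u * t^2))))
            = fun t : ℝ => ENNReal.ofReal (u ^ (a-1) * Real.exp (-(b*u))) * ENNReal.ofReal (Real.exp (-(u * t^2)))
          from funext fun t => ENNReal.ofReal_mul (by positivity)]
        rw [lintegral_const_mul' _ _ ENNReal.ofReal_ne_top]
        have hgauss : (∫⁻ t : ℝ, ENNReal.ofReal (Real.exp (-(u * t^2)))) = ENNReal.ofReal (Real.sqrt (π / u)) := by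
          rw [← ofReal_integral_eq_lintegral_ofReal
            (by simpa [neg_mul] using integrable_exp_neg_mul_sq hu)
            (ae_of_all _ fun t => (Real.exp_pos _).le)]
          congr 1
          simpa [neg_mul] using integral_gaussian u
        rw [hgauss, ← ENNReal.ofReal_mul (by positivity), ← ENNReal.ofReal_mul (by positivity)]
        congr 1
        have hsq : Real.sqrt (π / u) = Real.sqrt π * u ^ (-(1/2):ℝ) := by
          rw [Real.sqrt_div (le_of_lt Real.pi_pos), Real.sqrt_eq_rpow, Real.rpow_neg hu.le,
            div_eq_mul_inv, Real.sqrt_eq_rpow]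
        rw [hsq, show a - 1/2 - 1 = (a-1) + (-(1/2)) by ring, Real.rpow_add hu]
        ring
    _ = ENNReal.ofReal (Real.sqrt π) * ENNReal.ofReal (b ^ (-(a - 1/2)) * Real.Gamma (a - 1/2)) := by
        rw [lintegral_const_mul' _ _ ENNReal.ofReal_ne_top,
          ← aux_gamma_int' (by linarith : (0:ℝ) < a - 1/2) hb]
    _ = ENNReal.ofReal (Real.Gamma a) *
          ENNReal.ofReal (Real.sqrt π * Real.Gamma (a - 1/2) / Real.Gamma a * b ^ ((1:ℝ)/2 - a)) := by
        rw [← ENNReal.ofReal_mul (Real.sqrt_nonneg _), ← ENNReal.ofReal_mul hGa.le]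
        congr 1
        have h2 : (1:ℝ)/2 - a = -(a - 1/2) := by ring
        rw [h2]
        field_simp

lemma map_withDensity_equiv' {α β : Type*} [MeasurableSpace α] [MeasurableSpace β]
    (μ : Measure α) (T : α ≃ᵐ β) (f : β → ENNReal) (hf : Measurable f) :
    (μ.withDensity (fun x => f (T x))).map T = (μ.map T).withDensity f := by
  ext s hs
  rw [Measure.map_apply T.measurable hs, withDensity_apply _ hs,
    withDensity_apply _ (T.measurable hs), setLIntegral_map hs hf T.measurable]

lemma map_fst_withDensity' {α β : Type*} [MeasurableSpace α] [MeasurableSpace β]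
    (μ : Measure α) (ν : Measure β) [SFinite μ] [SFinite ν]
    (f : α × β → ENNReal) (hf : Measurable f) :
    ((μ.prod ν).withDensity f).map Prod.fst
      = μ.withDensity (fun x => ∫⁻ y, f (x, y) ∂ν) := by
  ext s hs
  rw [Measure.map_apply measurable_fst hs, withDensity_apply _ (measurable_fst hs),
    withDensity_apply _ hs, ← Set.prod_univ, ← Measure.prod_restrict,
    ← Measure.restrict_univ (μ := ν)]
  rw [Measure.restrict_univ, lintegral_prod _ hf.aemeasurable]

set_option maxHeartbeats 2000000 in
lemma beta_prime_projection_aux (d : ℕ) (β : ℝ) (hβ : (d : ℝ) / 2 < β)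
    (H : Submodule ℝ (E (d + 1))) (hH : Module.finrank ℝ H = d) (e : H ≃ₗᵢ[ℝ] E d) :
    Measure.map (fun y => e (H.orthogonalProjectionOnto y)) (betaPrimeM (d + 1) (β + 1 / 2))
      = betaPrimeM d β := by
  classical
  have hd0 : (0:ℝ) ≤ (d:ℝ) := Nat.cast_nonneg d
  have hβ0 : 0 < β := lt_of_le_of_lt (by positivity) hβ
  -- a unit normal vector of `H`
  have hfr : Module.finrank ℝ Hᗮ = 1 := by
    have h1 := Submodule.finrank_add_finrank_orthogonal (K := H)
    rw [hH, finrank_euclideanSpace_fin] at h1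
    omega
  obtain ⟨v, hvH, hv0⟩ := (Submodule.ne_bot_iff Hᗮ).mp (by
    intro h; rw [h] at hfr; simp at hfr)
  set u : E (d+1) := ‖v‖⁻¹ • v with hu_def
  have hun : ‖u‖ = 1 := by
    rw [hu_def, norm_smul, norm_inv, norm_norm,
      inv_mul_cancel₀ (norm_ne_zero_iff.mpr hv0)]
  have huH : u ∈ Hᗮ := Submodule.smul_mem _ _ hvH
  -- an orthonormal basis adapted to `H`
  set w : Fin d ⊕ Unit → E (d+1) :=
    Sum.elim (fun j => ((e.symm (EuclideanSpace.single j 1) : H) : E (d+1))) (fun _ => u)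
    with hw_def
  have hw : Orthonormal ℝ w := by
    rw [orthonormal_iff_ite]
    rintro (i | i) (j | j)
    · simp only [hw_def, Sum.elim_inl]
      rw [← Submodule.coe_inner, LinearIsometryEquiv.inner_map_map,
        EuclideanSpace.inner_single_left]
      simp [EuclideanSpace.single_apply, eq_comm]
    · simp only [hw_def, Sum.elim_inl, Sum.elim_inr]
      rw [show (inner ℝ ((e.symm (EuclideanSpace.single i 1) : H) : E (d+1)) u : ℝ) = 0 from
        Submodule.inner_right_of_mem_orthogonal (Submodule.coe_mem _) huH]
      simp
    · simp only [hw_def, Sum.elim_inl, Sum.elim_inr]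
      rw [show (inner ℝ u ((e.symm (EuclideanSpace.single j 1) : H) : E (d+1)) : ℝ) = 0 from
        (Submodule.inner_left_of_mem_orthogonal (Submodule.coe_mem _) huH)]
      simp
    · simp only [hw_def, Sum.elim_inr]
      rw [real_inner_self_eq_norm_sq, hun]
      simp
  have card_eq : Fintype.card (Fin d ⊕ Unit) = Module.finrank ℝ (E (d + 1)) := by
    simp [finrank_euclideanSpace_fin]
  set B : OrthonormalBasis (Fin d ⊕ Unit) ℝ (E (d + 1)) :=
    (basisOfOrthonormalOfCardEqFinrank hw card_eq).toOrthonormalBasis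
      (by rwa [coe_basisOfOrthonormalOfCardEqFinrank]) with hB_def
  have hB : ∀ i, B i = w i := fun i => by
    simp [hB_def, Module.Basis.coe_toOrthonormalBasis, coe_basisOfOrthonormalOfCardEqFinrank]
  -- the adapted measurable equivalence `E d × ℝ ≃ᵐ E (d+1)`
  set φ : (E d × ℝ) ≃ᵐ E (d + 1) :=
    ((MeasurableEquiv.toLp 2 (Fin d → ℝ)).symm.prodCongr
        (MeasurableEquiv.funUnique Unit ℝ).symm).trans
      ((MeasurableEquiv.sumPiEquivProdPi (fun _ : Fin d ⊕ Unit => ℝ)).symm.trans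
        ((MeasurableEquiv.toLp 2 (Fin d ⊕ Unit → ℝ)).symm.symm.trans
          B.measurableEquiv.symm)) with hφ_def
  have hφmp : MeasurePreserving φ (volume.prod volume) volume := by
    have m1 := (EuclideanSpace.volume_preserving_symm_measurableEquiv_toLp (Fin d)).prod
      (volume_preserving_funUnique Unit ℝ).symm
    have m2 := volume_measurePreserving_sumPiEquivProdPi_symm (fun _ : Fin d ⊕ Unit => ℝ)
    have m3 := (EuclideanSpace.volume_preserving_symm_measurableEquiv_toLp (Fin d ⊕ Unit)).symm
    have m4 := B.measurePreserving_measurableEquiv.symm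
    have key : MeasurePreserving
        (B.measurableEquiv.symm ∘ (MeasurableEquiv.toLp 2 (Fin d ⊕ Unit → ℝ)).symm.symm ∘
          (MeasurableEquiv.sumPiEquivProdPi (fun _ : Fin d ⊕ Unit => ℝ)).symm ∘
          (Prod.map (MeasurableEquiv.toLp 2 (Fin d → ℝ)).symm
            (MeasurableEquiv.funUnique Unit ℝ).symm))
        (volume.prod volume) volume := by
      refine m4.comp (m3.comp (MeasurePreserving.comp ?_ m1))
      simpa [MeasureTheory.volume_pi, Measure.volume_eq_prod] using m2
    exact key
  have hφ_apply : ∀ (x : E d) (t : ℝ),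
      φ (x, t) = ((e.symm x : H) : E (d+1)) + t • u := by
    intro x t
    show B.repr.symm _ = _
    rw [← B.sum_repr_symm]
    rw [Fintype.sum_sum_type]
    simp only [hB, hw_def, Sum.elim_inl, Sum.elim_inr]
    have h1 : ∀ j : Fin d, ((MeasurableEquiv.toLp 2 (Fin d ⊕ Unit → ℝ)).symm.symm.toEquiv
            ((MeasurableEquiv.sumPiEquivProdPi fun _ => ℝ).symm.toEquiv
              (((MeasurableEquiv.toLp 2 (Fin d → ℝ)).symm.prodCongr
                (MeasurableEquiv.funUnique Unit ℝ).symm).toEquiv (x, t)))) (Sum.inl j) = x j :=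
      fun j => rfl
    have h2 : ((MeasurableEquiv.toLp 2 (Fin d ⊕ Unit → ℝ)).symm.symm.toEquiv
            ((MeasurableEquiv.sumPiEquivProdPi fun _ => ℝ).symm.toEquiv
              (((MeasurableEquiv.toLp 2 (Fin d → ℝ)).symm.prodCongr
                (MeasurableEquiv.funUnique Unit ℝ).symm).toEquiv (x, t)))) (Sum.inr ()) = t := rfl
    simp only [h1, h2]
    congr 1
    · have hx : ∑ j : Fin d, x j • EuclideanSpace.single j (1:ℝ) = x := by
        have := (EuclideanSpace.basisFun (Fin d) ℝ).sum_repr x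
        simpa [EuclideanSpace.basisFun_apply, EuclideanSpace.basisFun_repr] using this
      calc ∑ j : Fin d, x j • ((e.symm (EuclideanSpace.single j 1) : H) : E (d+1))
          = ((∑ j : Fin d, x j • e.symm (EuclideanSpace.single j 1) : H) : E (d+1)) := by
            push_cast; rfl
        _ = ((e.symm (∑ j : Fin d, x j • EuclideanSpace.single j 1) : H) : E (d+1)) := by
            rw [map_sum]; simp_rw [LinearIsometryEquiv.map_smul]
        _ = _ := by rw [hx]
    · simp
  -- projection and norm identities
  have hproj : ∀ p : E d × ℝ, e (H.orthogonalProjectionOnto (φ p)) = p.1 := by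
    rintro ⟨x, t⟩
    rw [hφ_apply x t, map_add, Submodule.orthogonalProjectionOnto_mem_subspace_eq_self,
      Submodule.orthogonalProjectionOnto_apply_of_mem_orthogonal
        (Submodule.smul_mem _ _ huH)]
    simp
  have hnorm : ∀ (x : E d) (t : ℝ), ‖φ (x, t)‖^2 = ‖x‖^2 + t^2 := by
    intro x t
    rw [hφ_apply, norm_add_sq_real,
      Submodule.inner_right_of_mem_orthogonal (Submodule.coe_mem _)
        (Submodule.smul_mem _ _ huH)]
    have hc : ‖((e.symm x : H) : E (d+1))‖ = ‖x‖ := by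
      rw [Submodule.norm_coe, LinearIsometryEquiv.norm_map]
    rw [hc, norm_smul, hun]
    simp [sq_abs]
    try ring
  -- measurability facts
  have hgmeas : Measurable (fun y : E (d+1) => e (H.orthogonalProjectionOnto y)) :=
    (e.continuous.comp (ContinuousLinearMap.continuous _)).measurable
  set c1 : ℝ := Real.Gamma (β + 1/2) /
    (π ^ ((((d:ℕ)+1 : ℕ) : ℝ) / 2) * Real.Gamma (β + 1/2 - (((d:ℕ)+1 : ℕ) : ℝ) / 2)) with hc1_def
  have harg : β + 1/2 - (((d:ℕ)+1 : ℕ) : ℝ) / 2 = β - d/2 := by push_cast; ring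
  have hc1pos : 0 < c1 := by
    rw [hc1_def, harg]
    have h1 : 0 < Real.Gamma (β + 1/2) := Real.Gamma_pos_of_pos (by linarith)
    have h2 : 0 < Real.Gamma (β - d/2) := Real.Gamma_pos_of_pos (by linarith)
    have h3 : (0:ℝ) < π ^ ((((d:ℕ)+1 : ℕ) : ℝ) / 2) := Real.rpow_pos_of_pos Real.pi_pos _
    positivity
  set f : E (d+1) → ENNReal :=
    fun y => ENNReal.ofReal (c1 * (1 + ‖y‖^2) ^ (-(β + 1/2))) with hf_def
  have hf : Measurable f := by
    have hcont : Continuous fun y : E (d+1) => (1 + ‖y‖^2 : ℝ) :=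
      continuous_const.add ((continuous_norm).pow 2)
    have hcont2 : Continuous fun y : E (d+1) => (1 + ‖y‖^2 : ℝ) ^ (-(β + 1/2)) :=
      hcont.rpow_const (fun y => Or.inl (by positivity))
    exact (ENNReal.continuous_ofReal.comp (continuous_const.mul hcont2)).measurable
  have hsrc : betaPrimeM (d + 1) (β + 1/2) = volume.withDensity f := by
    simp only [betaPrimeM, hf_def, hc1_def]
  -- the computation
  calc Measure.map (fun y => e (H.orthogonalProjectionOnto y)) (betaPrimeM (d + 1) (β + 1 / 2))
      = Measure.map (fun y => e (H.orthogonalProjectionOnto y)) (volume.withDensity f) := by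
        rw [hsrc]
    _ = Measure.map (fun y => e (H.orthogonalProjectionOnto y))
          (((volume.prod volume).withDensity (fun p => f (φ p))).map φ) := by
        rw [map_withDensity_equiv' _ φ f hf, hφmp.map_eq]
    _ = Measure.map ((fun y => e (H.orthogonalProjectionOnto y)) ∘ φ)
          ((volume.prod volume).withDensity (fun p => f (φ p))) :=
        Measure.map_map hgmeas φ.measurable
    _ = Measure.map Prod.fst ((volume.prod volume).withDensity (fun p => f (φ p))) := by
        congr 1
        funext p
        exact hproj p
    _ = volume.withDensity (fun x => ∫⁻ t, f (φ (x, t))) :=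
        map_fst_withDensity' _ _ _ (hf.comp φ.measurable)
    _ = betaPrimeM d β := by
        simp only [betaPrimeM]
        congr 1
        funext x
        have hb : (0:ℝ) < 1 + ‖x‖^2 := by positivity
        have hfx : ∀ t : ℝ, f (φ (x, t))
            = ENNReal.ofReal c1 * ENNReal.ofReal (((1 + ‖x‖^2) + t^2) ^ (-(β + 1/2))) := by
          intro t
          rw [hf_def]
          simp only
          rw [hnorm x t, ENNReal.ofReal_mul hc1pos.le, show 1 + (‖x‖^2 + t^2) = (1 + ‖x‖^2) + t^2 by ring]
        simp_rw [hfx]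
        rw [lintegral_const_mul' _ _ ENNReal.ofReal_ne_top,
          lint_key' (by linarith : (1:ℝ)/2 < β + 1/2) hb,
          ← ENNReal.ofReal_mul hc1pos.le]
        congr 1
        rw [hc1_def, harg]
        have e2 : ((((d:ℕ)+1 : ℕ)) : ℝ) / 2 = (d:ℝ)/2 + 1/2 := by push_cast; ring
        have e3 : β + 1/2 - 1/2 = β := by ring
        have e4 : (1:ℝ)/2 - (β + 1/2) = -β := by ring
        rw [e2, e3, e4, Real.rpow_add Real.pi_pos, Real.sqrt_eq_rpow]
        have h1 : Real.Gamma (β + 1/2) ≠ 0 := (Real.Gamma_pos_of_pos (by linarith)).ne'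
        have h2 : Real.Gamma (β - d/2) ≠ 0 := (Real.Gamma_pos_of_pos (by linarith)).ne'
        have h3 : (π:ℝ) ^ ((d:ℝ)/2) ≠ 0 := (Real.rpow_pos_of_pos Real.pi_pos _).ne'
        have h4 : (π:ℝ) ^ ((1:ℝ)/2) ≠ 0 := (Real.rpow_pos_of_pos Real.pi_pos _).ne'
        rw [← mul_assoc, div_mul_div_comm]
        congr 1
        rw [div_eq_div_iff (mul_ne_zero (mul_ne_zero (mul_ne_zero h3 h4) h2) h1)
            (mul_ne_zero h3 h2)]
        ring

end BetaPrimeProjAux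

/-- Projection property of beta prime distributions: if `Y` in `ℝ^{d+1}` has the beta
prime distribution with parameter `β + 1/2` (β > d/2), then for any linear hyperplane `H`,
the orthogonal projection of `Y` onto `H` has the `d`-dimensional beta prime distribution
`μ̃_{d,β}` on `H` (identified with `ℝ^d` via any linear isometry). -/
theorem beta_prime_projection (d : ℕ) (β : ℝ) (hβ : (d : ℝ) / 2 < β)
    (H : Submodule ℝ (E (d + 1))) (hH : Module.finrank ℝ H = d) (e : H ≃ₗᵢ[ℝ] E d) :
    Measure.map (fun y => e (H.orthogonalProjectionOnto y)) (betaPrimeM (d + 1) (β + 1 / 2))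
      = betaPrimeM d β := by
  exact beta_prime_projection_aux d β hβ H hH e
end
end
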